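/- For all γ, ω ∈ ℝ, the spectra of the kagome operators satisfy σ_{γ,ω+π/4} = σ_{γ−6π,ω} and σ_{γ,−ω} = σ_{−γ,ω}. Consequently, to obtain all the spectra σ_{γ,ω} it suffices to consider ω ∈ [0,π/8]. -/

import Mathlib

/- STATEMENT 10: `σ_{γ,ω+π/4} = σ_{γ−6π,ω}` and `σ_{γ,−ω} = σ_{−γ,ω}` for the kagome
operator `Q_{γ,ω}` (hence it suffices to consider `ω ∈ [0,π/8]`). -/

open Complex Matrix

noncomputable section

/-- `ℓ²(ℤ²;ℂ³)`. -/
abbrev KH : Type := lp (fun _ : ℤ × ℤ => EuclideanSpace ℂ (Fin 3)) 2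

/-- `Q` is the kagome operator `Q_{γ,ω}`, written entrywise: the three components of
`ℂ³` correspond to the labels `1,3,5` of the kagome lattice, the magnetic translations are
`(τ₁v)_α = v_{α₁−1,α₂}`, `(τ₂v)_α = e^{iγα₁}v_{α₁,α₂−1}`, and `Q_{γ,ω}` has zero diagonal
blocks and off-diagonal blocks `Q₁₂ = e^{i(ω+γ/8)}(τ₁* + e^{−iγ/2}τ₁*τ₂)`,
`Q₁₃ = e^{−i(ω+γ/8)}(τ₁* + τ₂*)`, `Q₂₁ = e^{−i(ω+γ/8)}(τ₁ + e^{−iγ/2}τ₁τ₂*)`,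
`Q₂₃ = e^{i(ω+γ/8)}(e^{−iγ/2}τ₁τ₂* + τ₂*)`, `Q₃₁ = e^{i(ω+γ/8)}(τ₁ + τ₂)`,
`Q₃₂ = e^{−i(ω+γ/8)}(e^{−iγ/2}τ₁*τ₂ + τ₂)`. -/
def IsKagome (γ ω : ℝ) (Q : KH →L[ℂ] KH) : Prop :=
  ∀ v : KH, ∀ a b : ℤ,
    (Q v) (a, b) 0 =
        Complex.exp (Complex.I * ((ω : ℂ) + (γ : ℂ)/8)) *
          (v (a+1, b) 1 +
            Complex.exp (Complex.I * (-((γ : ℂ)/2) + (γ : ℂ) * ((a : ℂ)+1))) * v (a+1, b-1) 1)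
      + Complex.exp (-(Complex.I * ((ω : ℂ) + (γ : ℂ)/8))) *
          (v (a+1, b) 2 + Complex.exp (-(Complex.I * (γ : ℂ) * (a : ℂ))) * v (a, b+1) 2)
    ∧
    (Q v) (a, b) 1 =
        Complex.exp (-(Complex.I * ((ω : ℂ) + (γ : ℂ)/8))) *
          (v (a-1, b) 0 +
            Complex.exp (Complex.I * (-((γ : ℂ)/2) - (γ : ℂ) * ((a : ℂ)-1))) * v (a-1, b+1) 0)
      + Complex.exp (Complex.I * ((ω : ℂ) + (γ : ℂ)/8)) *
          (Complex.exp (Complex.I * (-((γ : ℂ)/2) - (γ : ℂ) * ((a : ℂ)-1))) * v (a-1, b+1) 2 +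
            Complex.exp (-(Complex.I * (γ : ℂ) * (a : ℂ))) * v (a, b+1) 2)
    ∧
    (Q v) (a, b) 2 =
        Complex.exp (Complex.I * ((ω : ℂ) + (γ : ℂ)/8)) *
          (v (a-1, b) 0 + Complex.exp (Complex.I * (γ : ℂ) * (a : ℂ)) * v (a, b-1) 0)
      + Complex.exp (-(Complex.I * ((ω : ℂ) + (γ : ℂ)/8))) *
          (Complex.exp (Complex.I * (-((γ : ℂ)/2) + (γ : ℂ) * ((a : ℂ)+1))) * v (a+1, b-1) 1 +
            Complex.exp (Complex.I * (γ : ℂ) * (a : ℂ)) * v (a, b-1) 1)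

namespace KagAux

abbrev E3 : Type := EuclideanSpace ℂ (Fin 3)

lemma norm_site (c : ℂ) (hc : ‖c‖ = 1) (σ : Equiv.Perm (Fin 3)) (w w' : E3)
    (hw : ∀ j, w' j = c * w (σ j)) : ‖w'‖ = ‖w‖ := by
  rw [EuclideanSpace.norm_eq, EuclideanSpace.norm_eq]
  congr 1
  rw [← Equiv.sum_comp σ (fun j => ‖w j‖ ^ 2)]
  refine Finset.sum_congr rfl fun j _ => ?_
  rw [hw, norm_mul, hc, one_mul]

def mkKH (g : ∀ _ : ℤ × ℤ, E3) (hg : Memℓp g 2) : KH := ⟨g, hg⟩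

@[simp] lemma mkKH_apply (g : ∀ _ : ℤ × ℤ, E3) (hg : Memℓp g 2) (x : ℤ × ℤ) :
    (mkKH g hg : KH) x = g x := rfl

def gfun (f : (ℤ × ℤ) ≃ (ℤ × ℤ)) (σ : Equiv.Perm (Fin 3)) (c : ℤ × ℤ → ℂ) (v : KH) :
    ∀ _ : ℤ × ℤ, E3 := fun x => (WithLp.toLp 2 (fun j => c x * v (f x) (σ j)) : E3)

lemma memℓp_gauge (f : (ℤ × ℤ) ≃ (ℤ × ℤ)) (σ : Equiv.Perm (Fin 3)) (c : ℤ × ℤ → ℂ)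
    (hc : ∀ x, ‖c x‖ = 1) (v : KH) :
    Memℓp (gfun f σ c v) 2 := by
  apply memℓp_gen
  have h2 : (0:ℝ) < (2 : ENNReal).toReal := by norm_num
  have hs : Summable fun y => ‖v y‖ ^ (2 : ENNReal).toReal :=
    (memℓp_gen_iff h2).1 (lp.memℓp v)
  have h : Summable fun x => ‖v (f x)‖ ^ (2 : ENNReal).toReal := f.summable_iff.2 hs
  refine h.congr fun x => ?_
  rw [norm_site (c x) (hc x) σ (v (f x)) (gfun f σ c v x) (fun j => rfl)]

def gauge (f : (ℤ × ℤ) ≃ (ℤ × ℤ)) (σ : Equiv.Perm (Fin 3)) (c : ℤ × ℤ → ℂ)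
    (hc : ∀ x, ‖c x‖ = 1) : KH ≃ₗᵢ[ℂ] KH where
  toFun v := mkKH (gfun f σ c v) (memℓp_gauge f σ c hc v)
  invFun v := mkKH (gfun f.symm σ.symm (fun x => (c (f.symm x))⁻¹) v)
    (memℓp_gauge f.symm σ.symm _ (fun x => by rw [norm_inv, hc, inv_one]) v)
  map_add' v w := by
    ext x j
    simp only [mkKH_apply, gfun, lp.coeFn_add, Pi.add_apply]
    simp only [PiLp.add_apply, mul_add]
  map_smul' t v := by
    ext x j
    simp only [mkKH_apply, gfun, lp.coeFn_smul, Pi.smul_apply, RingHom.id_apply]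
    simp only [PiLp.smul_apply, smul_eq_mul]
    change c x * (t * v (f x) (σ j)) = t * (c x * v (f x) (σ j))
    ring
  left_inv v := by
    ext x j
    have hne : c x ≠ 0 := fun h => by
      have := hc x; rw [h] at this; simp at this
    simp only [mkKH_apply, gfun, Equiv.apply_symm_apply, Equiv.symm_apply_apply]
    rw [inv_mul_cancel_left₀ (by
      intro h; have := hc (f.symm x); rw [h] at this; simp at this)]
  right_inv v := by
    ext x j
    have hne : ∀ y, c y ≠ 0 := fun y h => by
      have := hc y; rw [h] at this; simp at this
    simp only [mkKH_apply, gfun]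
    rw [Equiv.symm_apply_apply f x, Equiv.symm_apply_apply σ j,
      mul_inv_cancel_left₀ (hne x)]
  norm_map' v := by
    have h2 : (0:ℝ) < (2 : ENNReal).toReal := by norm_num
    show ‖(mkKH (gfun f σ c v) (memℓp_gauge f σ c hc v) : KH)‖ = ‖v‖
    rw [lp.norm_eq_tsum_rpow h2, lp.norm_eq_tsum_rpow h2]
    congr 1
    have h : ∀ x : ℤ × ℤ, ‖(mkKH (gfun f σ c v) (memℓp_gauge f σ c hc v) : KH) x‖ ^ (2 : ENNReal).toReal
        = ‖v (f x)‖ ^ (2 : ENNReal).toReal := fun x => by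
      rw [mkKH_apply, norm_site (c x) (hc x) σ (v (f x)) (gfun f σ c v x) (fun j => rfl)]
    rw [tsum_congr h, f.tsum_eq (fun y => ‖v y‖ ^ (2 : ENNReal).toReal)]

@[simp] lemma gauge_apply (f : (ℤ × ℤ) ≃ (ℤ × ℤ)) (σ : Equiv.Perm (Fin 3)) (c : ℤ × ℤ → ℂ)
    (hc : ∀ x, ‖c x‖ = 1) (v : KH) (x : ℤ × ℤ) (j : Fin 3) :
    (gauge f σ c hc v : KH) x j = c x * v (f x) (σ j) := rfl

@[simp] lemma gauge_symm_apply (f : (ℤ × ℤ) ≃ (ℤ × ℤ)) (σ : Equiv.Perm (Fin 3)) (c : ℤ × ℤ → ℂ)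
    (hc : ∀ x, ‖c x‖ = 1) (v : KH) (x : ℤ × ℤ) (j : Fin 3) :
    ((gauge f σ c hc).symm v : KH) x j = (c (f.symm x))⁻¹ * v (f.symm x) (σ.symm j) := rfl

/-- the unit of the operator algebra induced by a linear isometry equivalence -/
def toUnit (e : KH ≃ₗᵢ[ℂ] KH) : (KH →L[ℂ] KH)ˣ where
  val := (e.toContinuousLinearEquiv : KH →L[ℂ] KH)
  inv := (e.symm.toContinuousLinearEquiv : KH →L[ℂ] KH)
  val_inv := by ext v; simp
  inv_val := by ext v; simp

lemma conj_apply (e : KH ≃ₗᵢ[ℂ] KH) (Q : KH →L[ℂ] KH) (v : KH) :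
    ((toUnit e : KH →L[ℂ] KH) * Q * ((toUnit e)⁻¹ : (KH →L[ℂ] KH)ˣ)) v
      = e (Q (e.symm v)) := rfl

lemma spectrum_conj (e : KH ≃ₗᵢ[ℂ] KH) (Q : KH →L[ℂ] KH) :
    spectrum ℂ (((toUnit e : (KH →L[ℂ] KH)ˣ) : KH →L[ℂ] KH) * Q
      * (((toUnit e)⁻¹ : (KH →L[ℂ] KH)ˣ) : KH →L[ℂ] KH)) = spectrum ℂ Q :=
  spectrum.units_conjugate

def cU (n : ℤ) : ℤ × ℤ → ℂ := fun x =>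
  Complex.exp (((((n * (x.1 + x.2)) : ℤ) : ℝ) * Real.pi : ℝ) * Complex.I)

lemma hcU (n : ℤ) : ∀ x, ‖cU n x‖ = 1 := fun x => by
  rw [cU, Complex.norm_exp_ofReal_mul_I]

@[simp] lemma cU_eval (n p q : ℤ) :
    cU n (p, q) = Complex.exp (((((n * (p + q)) : ℤ) : ℝ) * Real.pi : ℝ) * Complex.I) := rfl

def Un (n : ℤ) : KH ≃ₗᵢ[ℂ] KH := gauge (Equiv.refl _) (Equiv.refl _) (cU n) (hcU n)

lemma exp_eq_exp_of_int (z w : ℂ) (m : ℤ) (h : z = w + m * (2 * (Real.pi:ℂ) * Complex.I)) :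
    Complex.exp z = Complex.exp w := by
  rw [h, Complex.exp_add, Complex.exp_int_mul_two_pi_mul_I, mul_one]

lemma kagShift (n : ℤ) (γ ω : ℝ) (Q : KH →L[ℂ] KH) (h : IsKagome γ ω Q) :
    IsKagome (γ - 6*n*Real.pi) (ω - n*(Real.pi/4))
      (((Un n).toContinuousLinearEquiv : KH →L[ℂ] KH).comp
        (Q.comp ((Un n).symm.toContinuousLinearEquiv : KH →L[ℂ] KH))) := by
  intro v a b
  refine ⟨?_, ?_, ?_⟩
  · show ((Un n) (Q ((Un n).symm v))) (a, b) 0 = _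
    rw [Un, gauge_apply]
    simp only [Equiv.refl_apply]
    rw [(h ((gauge (Equiv.refl _) (Equiv.refl _) (cU n) (hcU n)).symm v) a b).1]
    simp only [gauge_symm_apply, Equiv.refl_symm, Equiv.refl_apply, cU_eval]
    push_cast
    have k1 : Complex.exp ((n:ℂ) * ((a:ℂ) + (b:ℂ)) * (Real.pi:ℂ) * Complex.I) *
          Complex.exp (Complex.I * ((ω:ℂ) + (γ:ℂ) / 8)) *
          (Complex.exp ((n:ℂ) * ((a:ℂ) + 1 + (b:ℂ)) * (Real.pi:ℂ) * Complex.I))⁻¹ =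
        Complex.exp (Complex.I * ((ω:ℂ) - (n:ℂ) * ((Real.pi:ℂ) / 4) + ((γ:ℂ) - 6 * (n:ℂ) * (Real.pi:ℂ)) / 8)) := by
      simp only [← Complex.exp_neg, ← Complex.exp_add]
      exact exp_eq_exp_of_int _ _ 0 (by push_cast; ring)
    have k2 : Complex.exp ((n:ℂ) * ((a:ℂ) + (b:ℂ)) * (Real.pi:ℂ) * Complex.I) *
          Complex.exp (Complex.I * ((ω:ℂ) + (γ:ℂ) / 8)) *
          Complex.exp (Complex.I * (-((γ:ℂ) / 2) + (γ:ℂ) * ((a:ℂ) + 1))) *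
          (Complex.exp ((n:ℂ) * ((a:ℂ) + 1 + ((b:ℂ) - 1)) * (Real.pi:ℂ) * Complex.I))⁻¹ =
        Complex.exp (Complex.I * ((ω:ℂ) - (n:ℂ) * ((Real.pi:ℂ) / 4) + ((γ:ℂ) - 6 * (n:ℂ) * (Real.pi:ℂ)) / 8)) *
          Complex.exp (Complex.I * (-(((γ:ℂ) - 6 * (n:ℂ) * (Real.pi:ℂ)) / 2) + ((γ:ℂ) - 6 * (n:ℂ) * (Real.pi:ℂ)) * ((a:ℂ) + 1))) := by
      simp only [← Complex.exp_neg, ← Complex.exp_add]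
      exact exp_eq_exp_of_int _ _ (3*n*a + 2*n) (by push_cast; ring)
    have k3 : Complex.exp ((n:ℂ) * ((a:ℂ) + (b:ℂ)) * (Real.pi:ℂ) * Complex.I) *
          Complex.exp (-(Complex.I * ((ω:ℂ) + (γ:ℂ) / 8))) *
          (Complex.exp ((n:ℂ) * ((a:ℂ) + 1 + (b:ℂ)) * (Real.pi:ℂ) * Complex.I))⁻¹ =
        Complex.exp (-(Complex.I * ((ω:ℂ) - (n:ℂ) * ((Real.pi:ℂ) / 4) + ((γ:ℂ) - 6 * (n:ℂ) * (Real.pi:ℂ)) / 8))) := by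
      simp only [← Complex.exp_neg, ← Complex.exp_add]
      exact exp_eq_exp_of_int _ _ (-n) (by push_cast; ring)
    have k4 : Complex.exp ((n:ℂ) * ((a:ℂ) + (b:ℂ)) * (Real.pi:ℂ) * Complex.I) *
          Complex.exp (-(Complex.I * ((ω:ℂ) + (γ:ℂ) / 8))) *
          Complex.exp (-(Complex.I * (γ:ℂ) * (a:ℂ))) *
          (Complex.exp ((n:ℂ) * ((a:ℂ) + ((b:ℂ) + 1)) * (Real.pi:ℂ) * Complex.I))⁻¹ =
        Complex.exp (-(Complex.I * ((ω:ℂ) - (n:ℂ) * ((Real.pi:ℂ) / 4) + ((γ:ℂ) - 6 * (n:ℂ) * (Real.pi:ℂ)) / 8))) *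
          Complex.exp (-(Complex.I * ((γ:ℂ) - 6 * (n:ℂ) * (Real.pi:ℂ)) * (a:ℂ))) := by
      simp only [← Complex.exp_neg, ← Complex.exp_add]
      exact exp_eq_exp_of_int _ _ (-n - 3*n*a) (by push_cast; ring)
    linear_combination (v (a+1, b) 1 : ℂ) * k1 + (v (a+1, b-1) 1 : ℂ) * k2 +
      (v (a+1, b) 2 : ℂ) * k3 + (v (a, b+1) 2 : ℂ) * k4
  · show ((Un n) (Q ((Un n).symm v))) (a, b) 1 = _
    rw [Un, gauge_apply]
    simp only [Equiv.refl_apply]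
    rw [(h ((gauge (Equiv.refl _) (Equiv.refl _) (cU n) (hcU n)).symm v) a b).2.1]
    simp only [gauge_symm_apply, Equiv.refl_symm, Equiv.refl_apply, cU_eval]
    push_cast
    have k1 : Complex.exp ((n:ℂ) * ((a:ℂ) + (b:ℂ)) * (Real.pi:ℂ) * Complex.I) * Complex.exp (-(Complex.I * ((ω:ℂ) + (γ:ℂ) / 8))) * (Complex.exp ((n:ℂ) * ((a:ℂ) - 1 + (b:ℂ)) * (Real.pi:ℂ) * Complex.I))⁻¹ =
        Complex.exp (-(Complex.I * ((ω:ℂ) - (n:ℂ) * ((Real.pi:ℂ) / 4) + ((γ:ℂ) - 6 * (n:ℂ) * (Real.pi:ℂ)) / 8))) := by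
      simp only [← Complex.exp_neg, ← Complex.exp_add]
      exact exp_eq_exp_of_int _ _ (0) (by push_cast; ring)
    have k2 : Complex.exp ((n:ℂ) * ((a:ℂ) + (b:ℂ)) * (Real.pi:ℂ) * Complex.I) * Complex.exp (-(Complex.I * ((ω:ℂ) + (γ:ℂ) / 8))) * Complex.exp (Complex.I * (-((γ:ℂ) / 2) - (γ:ℂ) * ((a:ℂ) - 1))) * (Complex.exp ((n:ℂ) * ((a:ℂ) - 1 + ((b:ℂ) + 1)) * (Real.pi:ℂ) * Complex.I))⁻¹ =
        Complex.exp (-(Complex.I * ((ω:ℂ) - (n:ℂ) * ((Real.pi:ℂ) / 4) + ((γ:ℂ) - 6 * (n:ℂ) * (Real.pi:ℂ)) / 8))) * Complex.exp (Complex.I * (-(((γ:ℂ) - 6 * (n:ℂ) * (Real.pi:ℂ)) / 2) - ((γ:ℂ) - 6 * (n:ℂ) * (Real.pi:ℂ)) * ((a:ℂ) - 1))) := by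
      simp only [← Complex.exp_neg, ← Complex.exp_add]
      exact exp_eq_exp_of_int _ _ (n - 3*n*a) (by push_cast; ring)
    have k3 : Complex.exp ((n:ℂ) * ((a:ℂ) + (b:ℂ)) * (Real.pi:ℂ) * Complex.I) * Complex.exp (Complex.I * ((ω:ℂ) + (γ:ℂ) / 8)) * Complex.exp (Complex.I * (-((γ:ℂ) / 2) - (γ:ℂ) * ((a:ℂ) - 1))) * (Complex.exp ((n:ℂ) * ((a:ℂ) - 1 + ((b:ℂ) + 1)) * (Real.pi:ℂ) * Complex.I))⁻¹ =
        Complex.exp (Complex.I * ((ω:ℂ) - (n:ℂ) * ((Real.pi:ℂ) / 4) + ((γ:ℂ) - 6 * (n:ℂ) * (Real.pi:ℂ)) / 8)) * Complex.exp (Complex.I * (-(((γ:ℂ) - 6 * (n:ℂ) * (Real.pi:ℂ)) / 2) - ((γ:ℂ) - 6 * (n:ℂ) * (Real.pi:ℂ)) * ((a:ℂ) - 1))) := by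
      simp only [← Complex.exp_neg, ← Complex.exp_add]
      exact exp_eq_exp_of_int _ _ (2*n - 3*n*a) (by push_cast; ring)
    have k4 : Complex.exp ((n:ℂ) * ((a:ℂ) + (b:ℂ)) * (Real.pi:ℂ) * Complex.I) * Complex.exp (Complex.I * ((ω:ℂ) + (γ:ℂ) / 8)) * Complex.exp (-(Complex.I * (γ:ℂ) * (a:ℂ))) * (Complex.exp ((n:ℂ) * ((a:ℂ) + ((b:ℂ) + 1)) * (Real.pi:ℂ) * Complex.I))⁻¹ =
        Complex.exp (Complex.I * ((ω:ℂ) - (n:ℂ) * ((Real.pi:ℂ) / 4) + ((γ:ℂ) - 6 * (n:ℂ) * (Real.pi:ℂ)) / 8)) * Complex.exp (-(Complex.I * ((γ:ℂ) - 6 * (n:ℂ) * (Real.pi:ℂ)) * (a:ℂ))) := by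
      simp only [← Complex.exp_neg, ← Complex.exp_add]
      exact exp_eq_exp_of_int _ _ (-3*n*a) (by push_cast; ring)
    linear_combination (v (a-1, b) 0 : ℂ) * k1 + (v (a-1, b+1) 0 : ℂ) * k2 +
      (v (a-1, b+1) 2 : ℂ) * k3 + (v (a, b+1) 2 : ℂ) * k4
  · show ((Un n) (Q ((Un n).symm v))) (a, b) 2 = _
    rw [Un, gauge_apply]
    simp only [Equiv.refl_apply]
    rw [(h ((gauge (Equiv.refl _) (Equiv.refl _) (cU n) (hcU n)).symm v) a b).2.2]
    simp only [gauge_symm_apply, Equiv.refl_symm, Equiv.refl_apply, cU_eval]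
    push_cast
    have k1 : Complex.exp ((n:ℂ) * ((a:ℂ) + (b:ℂ)) * (Real.pi:ℂ) * Complex.I) * Complex.exp (Complex.I * ((ω:ℂ) + (γ:ℂ) / 8)) * (Complex.exp ((n:ℂ) * ((a:ℂ) - 1 + (b:ℂ)) * (Real.pi:ℂ) * Complex.I))⁻¹ =
        Complex.exp (Complex.I * ((ω:ℂ) - (n:ℂ) * ((Real.pi:ℂ) / 4) + ((γ:ℂ) - 6 * (n:ℂ) * (Real.pi:ℂ)) / 8)) := by
      simp only [← Complex.exp_neg, ← Complex.exp_add]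
      exact exp_eq_exp_of_int _ _ (n) (by push_cast; ring)
    have k2 : Complex.exp ((n:ℂ) * ((a:ℂ) + (b:ℂ)) * (Real.pi:ℂ) * Complex.I) * Complex.exp (Complex.I * ((ω:ℂ) + (γ:ℂ) / 8)) * Complex.exp (Complex.I * (γ:ℂ) * (a:ℂ)) * (Complex.exp ((n:ℂ) * ((a:ℂ) + ((b:ℂ) - 1)) * (Real.pi:ℂ) * Complex.I))⁻¹ =
        Complex.exp (Complex.I * ((ω:ℂ) - (n:ℂ) * ((Real.pi:ℂ) / 4) + ((γ:ℂ) - 6 * (n:ℂ) * (Real.pi:ℂ)) / 8)) * Complex.exp (Complex.I * ((γ:ℂ) - 6 * (n:ℂ) * (Real.pi:ℂ)) * (a:ℂ)) := by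
      simp only [← Complex.exp_neg, ← Complex.exp_add]
      exact exp_eq_exp_of_int _ _ (n + 3*n*a) (by push_cast; ring)
    have k3 : Complex.exp ((n:ℂ) * ((a:ℂ) + (b:ℂ)) * (Real.pi:ℂ) * Complex.I) * Complex.exp (-(Complex.I * ((ω:ℂ) + (γ:ℂ) / 8))) * Complex.exp (Complex.I * (-((γ:ℂ) / 2) + (γ:ℂ) * ((a:ℂ) + 1))) * (Complex.exp ((n:ℂ) * ((a:ℂ) + 1 + ((b:ℂ) - 1)) * (Real.pi:ℂ) * Complex.I))⁻¹ =
        Complex.exp (-(Complex.I * ((ω:ℂ) - (n:ℂ) * ((Real.pi:ℂ) / 4) + ((γ:ℂ) - 6 * (n:ℂ) * (Real.pi:ℂ)) / 8))) * Complex.exp (Complex.I * (-(((γ:ℂ) - 6 * (n:ℂ) * (Real.pi:ℂ)) / 2) + ((γ:ℂ) - 6 * (n:ℂ) * (Real.pi:ℂ)) * ((a:ℂ) + 1))) := by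
      simp only [← Complex.exp_neg, ← Complex.exp_add]
      exact exp_eq_exp_of_int _ _ (3*n*a + n) (by push_cast; ring)
    have k4 : Complex.exp ((n:ℂ) * ((a:ℂ) + (b:ℂ)) * (Real.pi:ℂ) * Complex.I) * Complex.exp (-(Complex.I * ((ω:ℂ) + (γ:ℂ) / 8))) * Complex.exp (Complex.I * (γ:ℂ) * (a:ℂ)) * (Complex.exp ((n:ℂ) * ((a:ℂ) + ((b:ℂ) - 1)) * (Real.pi:ℂ) * Complex.I))⁻¹ =
        Complex.exp (-(Complex.I * ((ω:ℂ) - (n:ℂ) * ((Real.pi:ℂ) / 4) + ((γ:ℂ) - 6 * (n:ℂ) * (Real.pi:ℂ)) / 8))) * Complex.exp (Complex.I * ((γ:ℂ) - 6 * (n:ℂ) * (Real.pi:ℂ)) * (a:ℂ)) := by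
      simp only [← Complex.exp_neg, ← Complex.exp_add]
      exact exp_eq_exp_of_int _ _ (3*n*a) (by push_cast; ring)
    linear_combination (v (a-1, b) 0 : ℂ) * k1 + (v (a, b-1) 0 : ℂ) * k2 +
      (v (a+1, b-1) 1 : ℂ) * k3 + (v (a, b-1) 1 : ℂ) * k4

def fR : (ℤ × ℤ) ≃ (ℤ × ℤ) where
  toFun x := (-x.2, -x.1)
  invFun x := (-x.2, -x.1)
  left_inv x := by simp
  right_inv x := by simp

@[simp] lemma fR_apply (p q : ℤ) : fR (p, q) = (-q, -p) := rfl
@[simp] lemma fR_symm_apply (p q : ℤ) : fR.symm (p, q) = (-q, -p) := rfl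

def σR : Equiv.Perm (Fin 3) := Equiv.swap 0 2

@[simp] lemma σR_symm : σR.symm = σR := Equiv.symm_swap 0 2
@[simp] lemma σR_zero : σR 0 = 2 := rfl
@[simp] lemma σR_one : σR 1 = 1 := rfl
@[simp] lemma σR_two : σR 2 = 0 := rfl

def cW (γ : ℝ) : ℤ × ℤ → ℂ := fun x =>
  Complex.exp (((-(γ * ((x.1 * x.2 : ℤ) : ℝ)) : ℝ) : ℂ) * Complex.I)

lemma hcW (γ : ℝ) : ∀ x, ‖cW γ x‖ = 1 := fun x => by
  rw [cW, Complex.norm_exp_ofReal_mul_I]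

@[simp] lemma cW_eval (γ : ℝ) (p q : ℤ) :
    cW γ (p, q) = Complex.exp (((-(γ * ((p * q : ℤ) : ℝ)) : ℝ) : ℂ) * Complex.I) := rfl

def Wr (γ : ℝ) : KH ≃ₗᵢ[ℂ] KH := gauge fR σR (cW γ) (hcW γ)

lemma kagRefl (γ ω : ℝ) (Q : KH →L[ℂ] KH) (h : IsKagome γ ω Q) :
    IsKagome (-γ) (-ω)
      (((Wr γ).toContinuousLinearEquiv : KH →L[ℂ] KH).comp
        (Q.comp ((Wr γ).symm.toContinuousLinearEquiv : KH →L[ℂ] KH))) := by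
  intro v a b
  refine ⟨?_, ?_, ?_⟩
  · show ((Wr γ) (Q ((Wr γ).symm v))) (a, b) 0 = _
    rw [Wr, gauge_apply]
    simp only [fR_apply, σR_zero]
    rw [(h ((gauge fR σR (cW γ) (hcW γ)).symm v) (-b) (-a)).2.2]
    simp only [gauge_symm_apply, fR_symm_apply, σR_symm, σR_zero, σR_one, σR_two, cW_eval]
    rw [show ((-(-a) : ℤ)) = a by ring, show ((-(-b) : ℤ)) = b by ring,
      show ((-(-a - 1) : ℤ)) = a + 1 by ring, show ((-(-b - 1) : ℤ)) = b + 1 by ring,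
      show ((-(-b + 1) : ℤ)) = b - 1 by ring]
    push_cast
    have k1 : Complex.exp (-((γ:ℂ) * ((a:ℂ) * (b:ℂ))) * Complex.I) * Complex.exp (Complex.I * ((ω:ℂ) + (γ:ℂ) / 8)) * (Complex.exp (-((γ:ℂ) * ((a:ℂ) * ((b:ℂ) + 1))) * Complex.I))⁻¹ = Complex.exp (-(Complex.I * (-(ω:ℂ) + -(γ:ℂ) / 8))) * Complex.exp (-(Complex.I * -(γ:ℂ) * (a:ℂ))) := by
      simp only [← Complex.exp_neg, ← Complex.exp_add]
      exact exp_eq_exp_of_int _ _ 0 (by push_cast; ring)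
    have k2 : Complex.exp (-((γ:ℂ) * ((a:ℂ) * (b:ℂ))) * Complex.I) * Complex.exp (Complex.I * ((ω:ℂ) + (γ:ℂ) / 8)) * Complex.exp (Complex.I * (γ:ℂ) * -(b:ℂ)) * (Complex.exp (-((γ:ℂ) * (((a:ℂ) + 1) * (b:ℂ))) * Complex.I))⁻¹ = Complex.exp (-(Complex.I * (-(ω:ℂ) + -(γ:ℂ) / 8))) := by
      simp only [← Complex.exp_neg, ← Complex.exp_add]
      exact exp_eq_exp_of_int _ _ 0 (by push_cast; ring)
    have k3 : Complex.exp (-((γ:ℂ) * ((a:ℂ) * (b:ℂ))) * Complex.I) * Complex.exp (-(Complex.I * ((ω:ℂ) + (γ:ℂ) / 8))) * Complex.exp (Complex.I * (-((γ:ℂ) / 2) + (γ:ℂ) * (-(b:ℂ) + 1))) * (Complex.exp (-((γ:ℂ) * (((a:ℂ) + 1) * ((b:ℂ) - 1))) * Complex.I))⁻¹ = Complex.exp (Complex.I * (-(ω:ℂ) + -(γ:ℂ) / 8)) * Complex.exp (Complex.I * (-(-(γ:ℂ) / 2) + -(γ:ℂ) * ((a:ℂ) + 1))) := by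
      simp only [← Complex.exp_neg, ← Complex.exp_add]
      exact exp_eq_exp_of_int _ _ 0 (by push_cast; ring)
    have k4 : Complex.exp (-((γ:ℂ) * ((a:ℂ) * (b:ℂ))) * Complex.I) * Complex.exp (-(Complex.I * ((ω:ℂ) + (γ:ℂ) / 8))) * Complex.exp (Complex.I * (γ:ℂ) * -(b:ℂ)) * (Complex.exp (-((γ:ℂ) * (((a:ℂ) + 1) * (b:ℂ))) * Complex.I))⁻¹ = Complex.exp (Complex.I * (-(ω:ℂ) + -(γ:ℂ) / 8)) := by
      simp only [← Complex.exp_neg, ← Complex.exp_add]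
      exact exp_eq_exp_of_int _ _ 0 (by push_cast; ring)
    linear_combination (v (a, b+1) 2 : ℂ) * k1 + (v (a+1, b) 2 : ℂ) * k2 +
      (v (a+1, b-1) 1 : ℂ) * k3 + (v (a+1, b) 1 : ℂ) * k4
  · show ((Wr γ) (Q ((Wr γ).symm v))) (a, b) 1 = _
    rw [Wr, gauge_apply]
    simp only [fR_apply, σR_one]
    rw [(h ((gauge fR σR (cW γ) (hcW γ)).symm v) (-b) (-a)).2.1]
    simp only [gauge_symm_apply, fR_symm_apply, σR_symm, σR_zero, σR_one, σR_two, cW_eval]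
    rw [show ((-(-a) : ℤ)) = a by ring, show ((-(-b) : ℤ)) = b by ring,
      show ((-(-a + 1) : ℤ)) = a - 1 by ring, show ((-(-b - 1) : ℤ)) = b + 1 by ring]
    push_cast
    have k1 : Complex.exp (-((γ:ℂ) * ((a:ℂ) * (b:ℂ))) * Complex.I) * Complex.exp (-(Complex.I * ((ω:ℂ) + (γ:ℂ) / 8))) * (Complex.exp (-((γ:ℂ) * ((a:ℂ) * ((b:ℂ) + 1))) * Complex.I))⁻¹ = Complex.exp (Complex.I * (-(ω:ℂ) + -(γ:ℂ) / 8)) * Complex.exp (-(Complex.I * -(γ:ℂ) * (a:ℂ))) := by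
      simp only [← Complex.exp_neg, ← Complex.exp_add]
      exact exp_eq_exp_of_int _ _ 0 (by push_cast; ring)
    have k2 : Complex.exp (-((γ:ℂ) * ((a:ℂ) * (b:ℂ))) * Complex.I) * Complex.exp (-(Complex.I * ((ω:ℂ) + (γ:ℂ) / 8))) * Complex.exp (Complex.I * (-((γ:ℂ) / 2) - (γ:ℂ) * (-(b:ℂ) - 1))) * (Complex.exp (-((γ:ℂ) * (((a:ℂ) - 1) * ((b:ℂ) + 1))) * Complex.I))⁻¹ = Complex.exp (Complex.I * (-(ω:ℂ) + -(γ:ℂ) / 8)) * Complex.exp (Complex.I * (-(-(γ:ℂ) / 2) - -(γ:ℂ) * ((a:ℂ) - 1))) := by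
      simp only [← Complex.exp_neg, ← Complex.exp_add]
      exact exp_eq_exp_of_int _ _ 0 (by push_cast; ring)
    have k3 : Complex.exp (-((γ:ℂ) * ((a:ℂ) * (b:ℂ))) * Complex.I) * Complex.exp (Complex.I * ((ω:ℂ) + (γ:ℂ) / 8)) * Complex.exp (Complex.I * (-((γ:ℂ) / 2) - (γ:ℂ) * (-(b:ℂ) - 1))) * (Complex.exp (-((γ:ℂ) * (((a:ℂ) - 1) * ((b:ℂ) + 1))) * Complex.I))⁻¹ = Complex.exp (-(Complex.I * (-(ω:ℂ) + -(γ:ℂ) / 8))) * Complex.exp (Complex.I * (-(-(γ:ℂ) / 2) - -(γ:ℂ) * ((a:ℂ) - 1))) := by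
      simp only [← Complex.exp_neg, ← Complex.exp_add]
      exact exp_eq_exp_of_int _ _ 0 (by push_cast; ring)
    have k4 : Complex.exp (-((γ:ℂ) * ((a:ℂ) * (b:ℂ))) * Complex.I) * Complex.exp (Complex.I * ((ω:ℂ) + (γ:ℂ) / 8)) * Complex.exp (-(Complex.I * (γ:ℂ) * -(b:ℂ))) * (Complex.exp (-((γ:ℂ) * (((a:ℂ) - 1) * (b:ℂ))) * Complex.I))⁻¹ = Complex.exp (-(Complex.I * (-(ω:ℂ) + -(γ:ℂ) / 8))) := by
      simp only [← Complex.exp_neg, ← Complex.exp_add]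
      exact exp_eq_exp_of_int _ _ 0 (by push_cast; ring)
    linear_combination (v (a, b+1) 2 : ℂ) * k1 + (v (a-1, b+1) 2 : ℂ) * k2 +
      (v (a-1, b+1) 0 : ℂ) * k3 + (v (a-1, b) 0 : ℂ) * k4
  · show ((Wr γ) (Q ((Wr γ).symm v))) (a, b) 2 = _
    rw [Wr, gauge_apply]
    simp only [fR_apply, σR_two]
    rw [(h ((gauge fR σR (cW γ) (hcW γ)).symm v) (-b) (-a)).1]
    simp only [gauge_symm_apply, fR_symm_apply, σR_symm, σR_zero, σR_one, σR_two, cW_eval]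
    rw [show ((-(-a) : ℤ)) = a by ring, show ((-(-b) : ℤ)) = b by ring,
      show ((-(-b + 1) : ℤ)) = b - 1 by ring, show ((-(-a - 1) : ℤ)) = a + 1 by ring,
      show ((-(-a + 1) : ℤ)) = a - 1 by ring]
    push_cast
    have k1 : Complex.exp (-((γ:ℂ) * ((a:ℂ) * (b:ℂ))) * Complex.I) * Complex.exp (Complex.I * ((ω:ℂ) + (γ:ℂ) / 8)) * (Complex.exp (-((γ:ℂ) * ((a:ℂ) * ((b:ℂ) - 1))) * Complex.I))⁻¹ = Complex.exp (-(Complex.I * (-(ω:ℂ) + -(γ:ℂ) / 8))) * Complex.exp (Complex.I * -(γ:ℂ) * (a:ℂ)) := by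
      simp only [← Complex.exp_neg, ← Complex.exp_add]
      exact exp_eq_exp_of_int _ _ 0 (by push_cast; ring)
    have k2 : Complex.exp (-((γ:ℂ) * ((a:ℂ) * (b:ℂ))) * Complex.I) * Complex.exp (Complex.I * ((ω:ℂ) + (γ:ℂ) / 8)) * Complex.exp (Complex.I * (-((γ:ℂ) / 2) + (γ:ℂ) * (-(b:ℂ) + 1))) * (Complex.exp (-((γ:ℂ) * (((a:ℂ) + 1) * ((b:ℂ) - 1))) * Complex.I))⁻¹ = Complex.exp (-(Complex.I * (-(ω:ℂ) + -(γ:ℂ) / 8))) * Complex.exp (Complex.I * (-(-(γ:ℂ) / 2) + -(γ:ℂ) * ((a:ℂ) + 1))) := by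
      simp only [← Complex.exp_neg, ← Complex.exp_add]
      exact exp_eq_exp_of_int _ _ 0 (by push_cast; ring)
    have k3 : Complex.exp (-((γ:ℂ) * ((a:ℂ) * (b:ℂ))) * Complex.I) * Complex.exp (-(Complex.I * ((ω:ℂ) + (γ:ℂ) / 8))) * (Complex.exp (-((γ:ℂ) * ((a:ℂ) * ((b:ℂ) - 1))) * Complex.I))⁻¹ = Complex.exp (Complex.I * (-(ω:ℂ) + -(γ:ℂ) / 8)) * Complex.exp (Complex.I * -(γ:ℂ) * (a:ℂ)) := by
      simp only [← Complex.exp_neg, ← Complex.exp_add]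
      exact exp_eq_exp_of_int _ _ 0 (by push_cast; ring)
    have k4 : Complex.exp (-((γ:ℂ) * ((a:ℂ) * (b:ℂ))) * Complex.I) * Complex.exp (-(Complex.I * ((ω:ℂ) + (γ:ℂ) / 8))) * Complex.exp (-(Complex.I * (γ:ℂ) * -(b:ℂ))) * (Complex.exp (-((γ:ℂ) * (((a:ℂ) - 1) * (b:ℂ))) * Complex.I))⁻¹ = Complex.exp (Complex.I * (-(ω:ℂ) + -(γ:ℂ) / 8)) := by
      simp only [← Complex.exp_neg, ← Complex.exp_add]
      exact exp_eq_exp_of_int _ _ 0 (by push_cast; ring)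
    linear_combination (v (a, b-1) 1 : ℂ) * k1 + (v (a+1, b-1) 1 : ℂ) * k2 +
      (v (a, b-1) 0 : ℂ) * k3 + (v (a-1, b) 0 : ℂ) * k4

lemma spectrum_conjCLM (e : KH ≃ₗᵢ[ℂ] KH) (Q : KH →L[ℂ] KH) :
    spectrum ℂ ((e.toContinuousLinearEquiv : KH →L[ℂ] KH).comp
      (Q.comp ((e.symm.toContinuousLinearEquiv : KH →L[ℂ] KH)))) = spectrum ℂ Q := by
  have hrw : (e.toContinuousLinearEquiv : KH →L[ℂ] KH).comp
      (Q.comp ((e.symm.toContinuousLinearEquiv : KH →L[ℂ] KH)))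
      = ↑(toUnit e) * Q * ↑(toUnit e)⁻¹ := rfl
  rw [hrw]
  exact spectrum.units_conjugate

lemma kag_unique {γ ω : ℝ} {Q Q' : KH →L[ℂ] KH}
    (h : IsKagome γ ω Q) (h' : IsKagome γ ω Q') : Q = Q' := by
  ext v x j
  obtain ⟨a, b⟩ := x
  fin_cases j
  · exact ((h v a b).1).trans ((h' v a b).1).symm
  · exact ((h v a b).2.1).trans ((h' v a b).2.1).symm
  · exact ((h v a b).2.2).trans ((h' v a b).2.2).symm

lemma kag_congr {γ₁ γ₂ ω₁ ω₂ : ℝ} {Q : KH →L[ℂ] KH} (hγ : γ₁ = γ₂) (hω : ω₁ = ω₂)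
    (h : IsKagome γ₁ ω₁ Q) : IsKagome γ₂ ω₂ Q := hγ ▸ hω ▸ h

end KagAux

open KagAux in
theorem stmt10 (γ ω : ℝ) (Q₁ Q₂ Q₃ Q₄ : KH →L[ℂ] KH)
    (h₁ : IsKagome γ (ω + Real.pi / 4) Q₁)
    (h₂ : IsKagome (γ - 6 * Real.pi) ω Q₂)
    (h₃ : IsKagome γ (-ω) Q₃)
    (h₄ : IsKagome (-γ) ω Q₄) :
    spectrum ℂ Q₁ = spectrum ℂ Q₂ ∧ spectrum ℂ Q₃ = spectrum ℂ Q₄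
    -- consequently, to obtain all the spectra it suffices to consider `ω ∈ [0,π/8]`
    ∧ (∀ γ' ω' : ℝ, ∀ Q' : KH →L[ℂ] KH, IsKagome γ' ω' Q' →
        ∃ γ'' : ℝ, ∃ ω'' ∈ Set.Icc (0 : ℝ) (Real.pi / 8), ∀ Q'' : KH →L[ℂ] KH,
          IsKagome γ'' ω'' Q'' → spectrum ℂ Q'' = spectrum ℂ Q') := by
  constructor
  · have hC := KagAux.kagShift 1 γ (ω + Real.pi / 4) Q₁ h₁
    have hC' : IsKagome (γ - 6 * Real.pi) ω _ :=
      KagAux.kag_congr (by push_cast; ring) (by push_cast; ring) hC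
    rw [kag_unique h₂ hC']
    exact (KagAux.spectrum_conjCLM _ _).symm
  constructor
  · have hC := KagAux.kagRefl γ (-ω) Q₃ h₃
    have hC' := KagAux.kag_congr rfl (neg_neg ω) hC
    rw [kag_unique h₄ hC']
    exact (KagAux.spectrum_conjCLM _ _).symm
  · intro γ' ω' Q' h'
    set n := ⌊ω' / (Real.pi / 4)⌋ with hn
    have hpi : (0:ℝ) < Real.pi / 4 := by positivity
    have h0 := Int.sub_floor_div_mul_nonneg ω' hpi
    have h1 := Int.sub_floor_div_mul_lt ω' hpi
    rw [← hn] at h0 h1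
    by_cases hle : ω' - (n:ℝ) * (Real.pi / 4) ≤ Real.pi / 8
    · refine ⟨γ' - 6*(n:ℝ)*Real.pi, ω' - (n:ℝ)*(Real.pi/4), ⟨h0, hle⟩, ?_⟩
      intro Q'' h''
      have hC := KagAux.kagShift n γ' ω' Q' h'
      rw [kag_unique h'' hC]
      exact KagAux.spectrum_conjCLM _ _
    · refine ⟨-γ' - 6*((-(n+1) : ℤ) : ℝ)*Real.pi, -ω' - ((-(n+1) : ℤ) : ℝ)*(Real.pi/4),
        ⟨by push_cast; linarith, by push_cast [not_le] at hle ⊢; linarith⟩, ?_⟩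
      intro Q'' h''
      have hR := KagAux.kagRefl γ' ω' Q' h'
      have hS := KagAux.kagShift (-(n+1)) (-γ') (-ω') _ hR
      rw [kag_unique h'' hS]
      exact (KagAux.spectrum_conjCLM _ _).trans (KagAux.spectrum_conjCLM _ _)


end
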